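/- Assume μ_k lies in the resolvent set of A for every k ∈ {1,…,q} and that the closed-loop system is exponentially stable. Then the controller solves the output regulation problem if and only if for every k ∈ {1,…,q} there exists z_k ∈ Z such that P(μ_k)·K z_k = −F φ_k − P_d(μ_k)·E φ_k and (μ_k I − G₁) z_k = 0. -/

import Mathlib

noncomputable section

open ContinuousLinearMap

variable {X Z U Ud Y W : Type*}
  [NormedAddCommGroup X] [NormedSpace ℂ X]
  [NormedAddCommGroup Z] [NormedSpace ℂ Z]
  [NormedAddCommGroup U] [NormedSpace ℂ U]
  [NormedAddCommGroup Ud] [NormedSpace ℂ Ud]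
  [NormedAddCommGroup Y] [NormedSpace ℂ Y]
  [NormedAddCommGroup W] [NormedSpace ℂ W]

/-- The closed-loop system operator `A_e` on `X × Z`:
`A_e(x,z) = (Ax + BKz, G₂Cx + G₁z + G₂DKz)`. -/
def Ae (A : X →L[ℂ] X) (B : U →L[ℂ] X) (C : X →L[ℂ] Y) (D : U →L[ℂ] Y)
    (G₁ : Z →L[ℂ] Z) (G₂ : Y →L[ℂ] Z) (K : Z →L[ℂ] U) : (X × Z) →L[ℂ] (X × Z) :=
  ((A.comp (fst ℂ X Z)) + ((B.comp K).comp (snd ℂ X Z))).prod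
    ((G₂.comp (C.comp (fst ℂ X Z))) + (G₁.comp (snd ℂ X Z))
      + ((G₂.comp (D.comp K)).comp (snd ℂ X Z)))

/-- The closed-loop input operator `B_e v = (B_d E v, G₂(D_d E v + F v))`. -/
def Be (Bd : Ud →L[ℂ] X) (Dd : Ud →L[ℂ] Y) (E : W →L[ℂ] Ud) (F : W →L[ℂ] Y)
    (G₂ : Y →L[ℂ] Z) : W →L[ℂ] (X × Z) :=
  (Bd.comp E).prod (G₂.comp ((Dd.comp E) + F))

/-- The closed-loop output operator `C_e(x,z) = Cx + DKz`. -/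
def Ce (C : X →L[ℂ] Y) (D : U →L[ℂ] Y) (K : Z →L[ℂ] U) : (X × Z) →L[ℂ] Y :=
  C.comp (fst ℂ X Z) + (D.comp K).comp (snd ℂ X Z)

/-- The closed-loop feedthrough operator `D_e = D_d E + F`. -/
def De (Dd : Ud →L[ℂ] Y) (E : W →L[ℂ] Ud) (F : W →L[ℂ] Y) : W →L[ℂ] Y :=
  (Dd.comp E) + F

/-- The controller `(G₁, G₂, K)` solves the output regulation problem: the closed-loop
system is exponentially stable and the regulation error decays at a uniform exponential
rate for all initial states of the system, the controller and the exosystem. -/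
def SolvesORP (A : X →L[ℂ] X) (B : U →L[ℂ] X) (Bd : Ud →L[ℂ] X)
    (C : X →L[ℂ] Y) (D : U →L[ℂ] Y) (Dd : Ud →L[ℂ] Y)
    (S : W →L[ℂ] W) (E : W →L[ℂ] Ud) (F : W →L[ℂ] Y)
    (G₁ : Z →L[ℂ] Z) (G₂ : Y →L[ℂ] Z) (K : Z →L[ℂ] U) : Prop :=
  (∀ lam ∈ spectrum ℂ (Ae A B C D G₁ G₂ K), ‖lam‖ < 1) ∧
  ∃ M α : ℝ, 0 < M ∧ 0 < α ∧
    ∀ (x₀ : X) (z₀ : Z) (v₀ : W) (v : ℕ → W) (xe : ℕ → X × Z),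
      v 0 = v₀ → (∀ n, v (n + 1) = S (v n)) →
      xe 0 = (x₀, z₀) →
      (∀ n, xe (n + 1) = Ae A B C D G₁ G₂ K (xe n) + Be Bd Dd E F G₂ (v n)) →
      ∀ n : ℕ, ‖Ce C D K (xe n) + De Dd E F (v n)‖
        ≤ M * Real.exp (-(α * n)) * (‖x₀‖ + ‖z₀‖ + ‖v₀‖)

/-- The controller `(G₁, G₂, K)` solves the robust output regulation problem: it solves
the output regulation problem and retains exponential decay of the regulation error for
every perturbation of the operators `(A, B, B_d, C, D, D_d, E, F)` that preserves the
exponential stability of the closed-loop system. -/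
def SolvesRORP (A : X →L[ℂ] X) (B : U →L[ℂ] X) (Bd : Ud →L[ℂ] X)
    (C : X →L[ℂ] Y) (D : U →L[ℂ] Y) (Dd : Ud →L[ℂ] Y)
    (S : W →L[ℂ] W) (E : W →L[ℂ] Ud) (F : W →L[ℂ] Y)
    (G₁ : Z →L[ℂ] Z) (G₂ : Y →L[ℂ] Z) (K : Z →L[ℂ] U) : Prop :=
  SolvesORP A B Bd C D Dd S E F G₁ G₂ K ∧
  ∀ (A' : X →L[ℂ] X) (B' : U →L[ℂ] X) (Bd' : Ud →L[ℂ] X)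
    (C' : X →L[ℂ] Y) (D' : U →L[ℂ] Y) (Dd' : Ud →L[ℂ] Y)
    (E' : W →L[ℂ] Ud) (F' : W →L[ℂ] Y),
    (∀ lam ∈ spectrum ℂ (Ae A' B' C' D' G₁ G₂ K), ‖lam‖ < 1) →
    ∃ M α : ℝ, 0 < M ∧ 0 < α ∧
      ∀ (x₀ : X) (z₀ : Z) (v₀ : W) (v : ℕ → W) (xe : ℕ → X × Z),
        v 0 = v₀ → (∀ n, v (n + 1) = S (v n)) →
        xe 0 = (x₀, z₀) →
        (∀ n, xe (n + 1) = Ae A' B' C' D' G₁ G₂ K (xe n) + Be Bd' Dd' E' F' G₂ (v n)) →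
        ∀ n : ℕ, ‖Ce C' D' K (xe n) + De Dd' E' F' (v n)‖
          ≤ M * Real.exp (-(α * n)) * (‖x₀‖ + ‖z₀‖ + ‖v₀‖)


open Filter Topology in
open scoped NNReal ENNReal in
/-- If the spectrum of a bounded operator on a complex Banach space lies in the open
unit disc, the powers of the operator decay geometrically (Gelfand's formula). -/
lemma decay_of_spectrum_lt_one {E : Type*} [NormedAddCommGroup E] [NormedSpace ℂ E]
    [CompleteSpace E] (T : E →L[ℂ] E) (h : ∀ lam ∈ spectrum ℂ T, ‖lam‖ < 1) :
    ∃ M r : ℝ, 0 < M ∧ 0 < r ∧ r < 1 ∧ ∀ n : ℕ, ‖T ^ n‖ ≤ M * r ^ n := by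
  have hρ : spectralRadius ℂ T < 1 := by
    rcases Set.eq_empty_or_nonempty (spectrum ℂ T) with hs | hs
    · simp [spectralRadius, hs]
    · have := spectrum.spectralRadius_lt_of_forall_lt_of_nonempty hs
        (r := 1) (fun z hz => by
          have := h z hz
          exact_mod_cast (by rw [← NNReal.coe_lt_coe, coe_nnnorm, NNReal.coe_one]; exact this : ‖z‖₊ < (1 : ℝ≥0)))
      simpa using this
  obtain ⟨r, hr1, hr2⟩ := ENNReal.lt_iff_exists_nnreal_btwn.mp hρ
  have hrpos : (0:ℝ≥0∞) < r := lt_of_le_of_lt zero_le hr1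
  have hrpos' : (0:ℝ) < (r:ℝ) := by exact_mod_cast hrpos
  have hrlt1 : (r:ℝ) < 1 := by exact_mod_cast hr2
  have hG := spectrum.pow_nnnorm_pow_one_div_tendsto_nhds_spectralRadius T
  have hev : ∀ᶠ n : ℕ in atTop, (‖T ^ n‖₊ : ℝ≥0∞) ^ (1 / (n:ℝ)) < r :=
    hG.eventually_lt_const hr1
  obtain ⟨N, hN⟩ := (hev.and (eventually_ge_atTop 1)).exists_forall_of_atTop
  have key : ∀ n, N ≤ n → ‖T ^ n‖ ≤ (r:ℝ) ^ n := by
    intro n hn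
    obtain ⟨h1, h2⟩ := hN n hn
    have hne : (n:ℝ) ≠ 0 := by positivity
    have h3 : ((‖T ^ n‖₊ : ℝ≥0∞) ^ (1 / (n:ℝ))) ^ (n:ℝ) < (r:ℝ≥0∞) ^ (n:ℝ) :=
      ENNReal.rpow_lt_rpow h1 (by positivity)
    rw [← ENNReal.rpow_mul, one_div, inv_mul_cancel₀ hne, ENNReal.rpow_one] at h3
    rw [ENNReal.rpow_natCast, ← ENNReal.coe_pow, ENNReal.coe_lt_coe] at h3
    have := h3.le
    calc ‖T ^ n‖ = ((‖T ^ n‖₊ : ℝ≥0) : ℝ) := rfl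
    _ ≤ ((r ^ n : ℝ≥0) : ℝ) := by exact_mod_cast this
    _ = (r:ℝ) ^ n := by push_cast; ring
  set S : ℝ := (∑ i ∈ Finset.range N, ‖T ^ i‖) + 1 with hS
  have hSpos : 0 < S := by
    have : 0 ≤ ∑ i ∈ Finset.range N, ‖T ^ i‖ :=
      Finset.sum_nonneg fun i _ => norm_nonneg _
    linarith
  refine ⟨S / (r:ℝ) ^ N, r, by positivity, hrpos', hrlt1, fun n => ?_⟩
  rcases le_or_gt N n with hn | hn
  · have h1 : (1:ℝ) ≤ S / (r:ℝ)^N := by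
      rw [le_div_iff₀ (by positivity), one_mul]
      have h2 : (r:ℝ)^N ≤ 1 := pow_le_one₀ hrpos'.le hrlt1.le
      have h3 : 0 ≤ ∑ i ∈ Finset.range N, ‖T ^ i‖ :=
        Finset.sum_nonneg fun i _ => norm_nonneg _
      rw [hS]; linarith
    calc ‖T ^ n‖ ≤ (r:ℝ) ^ n := key n hn
    _ = 1 * (r:ℝ)^n := by ring
    _ ≤ S / (r:ℝ)^N * (r:ℝ)^n := by
        apply mul_le_mul_of_nonneg_right h1 (by positivity)
  · have h1 : ‖T ^ n‖ ≤ S := by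
      have : ‖T ^ n‖ ≤ ∑ i ∈ Finset.range N, ‖T ^ i‖ :=
        Finset.single_le_sum (f := fun i => ‖T ^ i‖)
          (fun i _ => norm_nonneg _) (Finset.mem_range.mpr hn)
      linarith
    have h2 : (r:ℝ)^N ≤ (r:ℝ)^n := pow_le_pow_of_le_one hrpos'.le hrlt1.le hn.le
    calc ‖T ^ n‖ ≤ S := h1
    _ = S / (r:ℝ)^N * (r:ℝ)^N := by field_simp
    _ ≤ S / (r:ℝ)^N * (r:ℝ)^n := by
        apply mul_le_mul_of_nonneg_left h2 (by positivity)

/-- A continuous linear map on `Fin q → ℂ` is determined by its values on basis vectors. -/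
lemma clm_pi_decomp {q : ℕ} {V : Type*} [NormedAddCommGroup V] [NormedSpace ℂ V]
    (T : (Fin q → ℂ) →L[ℂ] V) (w : Fin q → ℂ) :
    T w = ∑ k, w k • T (Pi.single k 1) := by
  have hw : w = ∑ k, w k • (Pi.single k 1 : Fin q → ℂ) := by
    simpa [← Pi.single_smul] using (Finset.univ_sum_single w).symm
  conv_lhs => rw [hw]
  rw [map_sum]
  simp

set_option maxHeartbeats 1600000 in
/-- If each `μ_k` lies in the resolvent set of `A` and the closed-loop
system is exponentially stable, the controller solves the output regulation problem
iff the equations `P(μ_k) K z_k = −F φ_k − P_d(μ_k) E φ_k`, `(μ_k − G₁) z_k = 0`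
are solvable for every `k`. -/
theorem orp_iff_regulator_constraints
    {X Z U Ud Y : Type*}
    [NormedAddCommGroup X] [NormedSpace ℂ X] [CompleteSpace X]
    [NormedAddCommGroup Z] [NormedSpace ℂ Z] [CompleteSpace Z]
    [NormedAddCommGroup U] [InnerProductSpace ℂ U] [CompleteSpace U]
    [NormedAddCommGroup Ud] [InnerProductSpace ℂ Ud] [CompleteSpace Ud]
    [NormedAddCommGroup Y] [InnerProductSpace ℂ Y] [CompleteSpace Y]
    (A : X →L[ℂ] X) (B : U →L[ℂ] X) (Bd : Ud →L[ℂ] X)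
    (C : X →L[ℂ] Y) (D : U →L[ℂ] Y) (Dd : Ud →L[ℂ] Y)
    (q : ℕ) (μ : Fin q → ℂ) (hμ : ∀ k, ‖μ k‖ = 1)
    (E : (Fin q → ℂ) →L[ℂ] Ud) (F : (Fin q → ℂ) →L[ℂ] Y)
    (G₁ : Z →L[ℂ] Z) (G₂ : Y →L[ℂ] Z) (K : Z →L[ℂ] U)
    (hres : ∀ k, μ k ∈ resolventSet ℂ A)
    (hCL : ∀ lam ∈ spectrum ℂ (Ae A B C D G₁ G₂ K), ‖lam‖ < 1) :
    SolvesORP A B Bd C D Dd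
        (ContinuousLinearMap.pi fun k => μ k • ContinuousLinearMap.proj k) E F G₁ G₂ K
      ↔ ∀ k : Fin q, ∃ zk : Z,
          (C (Ring.inverse (algebraMap ℂ (X →L[ℂ] X) (μ k) - A) (B (K zk))) + D (K zk))
            = -(F (Pi.single k 1))
              - (C (Ring.inverse (algebraMap ℂ (X →L[ℂ] X) (μ k) - A)
                    (Bd (E (Pi.single k 1)))) + Dd (E (Pi.single k 1)))
          ∧ μ k • zk - G₁ zk = 0 := by
  classical
  set SS : (Fin q → ℂ) →L[ℂ] (Fin q → ℂ) :=
      ContinuousLinearMap.pi fun k => μ k • ContinuousLinearMap.proj k with hSSdef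
  set AE := Ae A B C D G₁ G₂ K with hAEdef
  set BE := Be Bd Dd E F G₂ with hBEdef
  set CE := Ce C D K with hCEdef
  set DE := De Dd E F with hDEdef
  have hAe : ∀ p : X × Z,
      AE p = (A p.1 + B (K p.2), G₂ (C p.1) + G₁ p.2 + G₂ (D (K p.2))) := fun p => rfl
  have hBe : ∀ w, BE w = (Bd (E w), G₂ (Dd (E w) + F w)) := fun w => rfl
  have hCe : ∀ p : X × Z, CE p = C p.1 + D (K p.2) := fun p => rfl
  have hDe : ∀ w, DE w = Dd (E w) + F w := fun w => rfl
  have hSφ : ∀ k, SS (Pi.single k 1) = μ k • (Pi.single k 1 : Fin q → ℂ) := by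
    intro k
    funext j
    rcases eq_or_ne j k with h | h <;>
      simp [hSSdef, ContinuousLinearMap.pi_apply, Pi.single_apply, h]
  have hinvA1 : ∀ (k : Fin q) (w : X),
      (algebraMap ℂ (X →L[ℂ] X) (μ k) - A)
        (Ring.inverse (algebraMap ℂ (X →L[ℂ] X) (μ k) - A) w) = w := by
    intro k w
    rw [← ContinuousLinearMap.mul_apply, Ring.mul_inverse_cancel _ (hres k),
      ContinuousLinearMap.one_apply]
  have hinvA2 : ∀ (k : Fin q) (x : X),
      Ring.inverse (algebraMap ℂ (X →L[ℂ] X) (μ k) - A)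
        ((algebraMap ℂ (X →L[ℂ] X) (μ k) - A) x) = x := by
    intro k x
    rw [← ContinuousLinearMap.mul_apply, Ring.inverse_mul_cancel _ (hres k),
      ContinuousLinearMap.one_apply]
  have halgX : ∀ (k : Fin q) (x : X),
      (algebraMap ℂ (X →L[ℂ] X) (μ k) - A) x = μ k • x - A x := by
    intro k x; simp [Algebra.algebraMap_eq_smul_one]
  constructor
  · rintro ⟨-, M, α, hM, hα, hb⟩ k
    have hUe : IsUnit (algebraMap ℂ ((X × Z) →L[ℂ] (X × Z)) (μ k) - AE) := by
      apply spectrum.notMem_iff.mp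
      intro hmem
      have h1 := hCL _ hmem
      rw [hμ k] at h1
      exact lt_irrefl _ h1
    set Sig : X × Z := Ring.inverse (algebraMap ℂ ((X × Z) →L[ℂ] (X × Z)) (μ k) - AE)
        (BE (Pi.single k 1)) with hSigdef
    have hSig : μ k • Sig = AE Sig + BE (Pi.single k 1) := by
      have h1 : (algebraMap ℂ ((X × Z) →L[ℂ] (X × Z)) (μ k) - AE) Sig = BE (Pi.single k 1) := by
        rw [hSigdef, ← ContinuousLinearMap.mul_apply, Ring.mul_inverse_cancel _ hUe,
          ContinuousLinearMap.one_apply]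
      have h2 : μ k • Sig - AE Sig = BE (Pi.single k 1) := by
        rw [← h1]; simp [Algebra.algebraMap_eq_smul_one]
      rw [sub_eq_iff_eq_add'] at h2
      exact h2
    -- exhibit the trajectory `v n = μ k ^ n • φ_k`, `xe n = μ k ^ n • Σ_k`.
    have hvr : ∀ n : ℕ, (μ k) ^ (n + 1) • (Pi.single k 1 : Fin q → ℂ)
        = SS ((μ k) ^ n • (Pi.single k 1 : Fin q → ℂ)) := by
      intro n
      rw [map_smul, hSφ k, smul_smul, ← pow_succ]
    have hxr : ∀ n : ℕ, (μ k) ^ (n + 1) • Sig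
        = AE ((μ k) ^ n • Sig) + BE ((μ k) ^ n • (Pi.single k 1 : Fin q → ℂ)) := by
      intro n
      rw [map_smul, map_smul, ← smul_add, ← hSig, smul_smul, ← pow_succ]
    have hbound := hb Sig.1 Sig.2 (Pi.single k 1)
      (fun n => (μ k) ^ n • (Pi.single k 1 : Fin q → ℂ))
      (fun n => (μ k) ^ n • Sig)
      (by simp) hvr (by simp) hxr
    have hconst : ∀ n : ℕ, ‖CE Sig + DE (Pi.single k 1)‖
        ≤ M * Real.exp (-(α * n)) * (‖Sig.1‖ + ‖Sig.2‖ + ‖(Pi.single k 1 : Fin q → ℂ)‖) := by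
      intro n
      have h1 := hbound n
      simp only [map_smul] at h1
      rw [← smul_add, norm_smul, norm_pow, hμ k, one_pow, one_mul] at h1
      exact h1
    have hlim : Filter.Tendsto
        (fun n : ℕ => M * Real.exp (-(α * n))
          * (‖Sig.1‖ + ‖Sig.2‖ + ‖(Pi.single k 1 : Fin q → ℂ)‖))
        Filter.atTop (nhds 0) := by
      have h0 : Filter.Tendsto (fun n : ℕ => Real.exp (-(α * n))) Filter.atTop (nhds 0) := by
        have heq : ∀ n : ℕ, Real.exp (-(α * n)) = (Real.exp (-α)) ^ n := by
          intro n
          rw [← Real.exp_nat_mul]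
          ring_nf
        simp only [heq]
        exact tendsto_pow_atTop_nhds_zero_of_lt_one (Real.exp_pos _).le
          (Real.exp_lt_one_iff.mpr (by linarith))
      have := (h0.const_mul M).mul_const (‖Sig.1‖ + ‖Sig.2‖ + ‖(Pi.single k 1 : Fin q → ℂ)‖)
      simpa using this
    have hzero : CE Sig + DE (Pi.single k 1) = 0 := by
      rw [← norm_le_zero_iff]
      exact le_of_tendsto_of_tendsto' tendsto_const_nhds hlim hconst
    have hzero' : C Sig.1 + D (K Sig.2) + (Dd (E (Pi.single k 1)) + F (Pi.single k 1)) = 0 := by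
      rw [hCe, hDe] at hzero
      linear_combination (norm := abel) hzero
    have hfst : μ k • Sig.1 = A Sig.1 + B (K Sig.2) + Bd (E (Pi.single k 1)) := by
      have h1 := congrArg Prod.fst hSig
      simp only [hAe, hBe, Prod.smul_fst, Prod.fst_add] at h1
      linear_combination (norm := abel) h1
    have hsnd : μ k • Sig.2 = G₂ (C Sig.1) + G₁ Sig.2 + G₂ (D (K Sig.2))
        + G₂ (Dd (E (Pi.single k 1)) + F (Pi.single k 1)) := by
      have h1 := congrArg Prod.snd hSig
      simp only [hAe, hBe, Prod.smul_snd, Prod.snd_add] at h1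
      linear_combination (norm := abel) h1
    have hxs : Sig.1 = Ring.inverse (algebraMap ℂ (X →L[ℂ] X) (μ k) - A) (B (K Sig.2))
        + Ring.inverse (algebraMap ℂ (X →L[ℂ] X) (μ k) - A) (Bd (E (Pi.single k 1))) := by
      have h5 : (algebraMap ℂ (X →L[ℂ] X) (μ k) - A) Sig.1
          = B (K Sig.2) + Bd (E (Pi.single k 1)) := by
        rw [halgX k]
        linear_combination (norm := abel) hfst
      have h6 : Sig.1 = Ring.inverse (algebraMap ℂ (X →L[ℂ] X) (μ k) - A)
          (B (K Sig.2) + Bd (E (Pi.single k 1))) := by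
        rw [← h5, hinvA2 k]
      rw [map_add] at h6
      exact h6
    refine ⟨Sig.2, ?_, ?_⟩
    · rw [hxs, map_add] at hzero'
      linear_combination (norm := abel) hzero'
    · have h4 : μ k • Sig.2 - G₁ Sig.2
          = G₂ (C Sig.1 + D (K Sig.2) + (Dd (E (Pi.single k 1)) + F (Pi.single k 1))) := by
        rw [map_add, map_add]
        linear_combination (norm := abel) hsnd
      rw [hzero', map_zero] at h4
      exact h4
  · intro hc
    refine ⟨hCL, ?_⟩
    obtain ⟨M, r, hM, hr0, hr1, hpow⟩ := decay_of_spectrum_lt_one AE hCL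
    choose z hz1 hz2 using hc
    set σk : Fin q → X × Z := fun k =>
      (Ring.inverse (algebraMap ℂ (X →L[ℂ] X) (μ k) - A) (B (K (z k)))
        + Ring.inverse (algebraMap ℂ (X →L[ℂ] X) (μ k) - A) (Bd (E (Pi.single k 1))), z k)
      with hσkdef
    have hregk : ∀ k, CE (σk k) + DE (Pi.single k 1) = 0 := by
      intro k
      have e1 : (σk k).1 = Ring.inverse (algebraMap ℂ (X →L[ℂ] X) (μ k) - A) (B (K (z k)))
          + Ring.inverse (algebraMap ℂ (X →L[ℂ] X) (μ k) - A) (Bd (E (Pi.single k 1))) := rfl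
      have e2 : (σk k).2 = z k := rfl
      rw [hCe, hDe, e1, e2, map_add]
      calc C (Ring.inverse (algebraMap ℂ (X →L[ℂ] X) (μ k) - A) (B (K (z k))))
            + C (Ring.inverse (algebraMap ℂ (X →L[ℂ] X) (μ k) - A) (Bd (E (Pi.single k 1))))
            + D (K (z k)) + (Dd (E (Pi.single k 1)) + F (Pi.single k 1))
          = (C (Ring.inverse (algebraMap ℂ (X →L[ℂ] X) (μ k) - A) (B (K (z k)))) + D (K (z k)))
            + (C (Ring.inverse (algebraMap ℂ (X →L[ℂ] X) (μ k) - A) (Bd (E (Pi.single k 1))))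
              + Dd (E (Pi.single k 1)) + F (Pi.single k 1)) := by abel
        _ = 0 := by rw [hz1 k]; abel
    have hσ : ∀ k : Fin q, AE (σk k) + BE (Pi.single k 1) = μ k • σk k := by
      intro k
      have hx : A (σk k).1 + B (K (z k)) + Bd (E (Pi.single k 1)) = μ k • (σk k).1 := by
        have h5 : (algebraMap ℂ (X →L[ℂ] X) (μ k) - A) (σk k).1
            = B (K (z k)) + Bd (E (Pi.single k 1)) := by
          have e1 : (σk k).1 = Ring.inverse (algebraMap ℂ (X →L[ℂ] X) (μ k) - A) (B (K (z k)))
              + Ring.inverse (algebraMap ℂ (X →L[ℂ] X) (μ k) - A) (Bd (E (Pi.single k 1))) := rfl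
          rw [e1, map_add, hinvA1 k, hinvA1 k]
        rw [halgX k] at h5
        calc A (σk k).1 + B (K (z k)) + Bd (E (Pi.single k 1))
            = A (σk k).1 + (B (K (z k)) + Bd (E (Pi.single k 1))) := by abel
          _ = A (σk k).1 + (μ k • (σk k).1 - A (σk k).1) := by rw [h5]
          _ = μ k • (σk k).1 := by abel
      have hz' : G₂ (C (σk k).1) + G₁ (z k) + G₂ (D (K (z k)))
          + G₂ (Dd (E (Pi.single k 1)) + F (Pi.single k 1)) = μ k • z k := by
        have hreg0 : C (σk k).1 + D (K (z k))
            + (Dd (E (Pi.single k 1)) + F (Pi.single k 1)) = 0 := by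
          have := hregk k
          rw [hCe, hDe] at this
          linear_combination (norm := abel) this
        have hcomb : G₂ (C (σk k).1) + G₁ (z k) + G₂ (D (K (z k)))
            + G₂ (Dd (E (Pi.single k 1)) + F (Pi.single k 1))
            = G₁ (z k) + G₂ (C (σk k).1 + D (K (z k))
                + (Dd (E (Pi.single k 1)) + F (Pi.single k 1))) := by
          simp only [map_add]
          abel
        rw [hcomb, hreg0, map_zero, add_zero]
        exact (sub_eq_zero.mp (hz2 k)).symm
      rw [hAe, hBe]
      have h2 : (σk k).2 = z k := rfl
      refine Prod.ext ?_ ?_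
      · simpa [h2] using hx
      · simpa [h2] using hz'
    -- constants
    set CS : ℝ := ∑ k, ‖σk k‖ with hCSdef
    have hCS0 : 0 ≤ CS := Finset.sum_nonneg fun k _ => norm_nonneg _
    refine ⟨M * (‖CE‖ + 1) * (CS + 1), -Real.log r, by positivity,
      by simpa using neg_pos.mpr (Real.log_neg hr0 hr1), ?_⟩
    intro x₀ z₀ v₀ v xe hv0 hvr hx0 hxr n
    have hexp : Real.exp (-(-Real.log r * n)) = r ^ n := by
      rw [neg_mul, neg_neg, mul_comm, Real.exp_nat_mul, Real.exp_log hr0]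
    set p : ℕ → X × Z := fun n => ∑ k, v n k • σk k with hpdef
    have hvk : ∀ (m : ℕ) (k : Fin q), v (m + 1) k = μ k * v m k := by
      intro m k
      rw [hvr m]
      rfl
    have hp : ∀ m, AE (p m) + BE (v m) = p (m + 1) := by
      intro m
      rw [hpdef]
      simp only [map_sum]
      rw [clm_pi_decomp BE (v m), ← Finset.sum_add_distrib]
      refine Finset.sum_congr rfl fun k _ => ?_
      rw [map_smul, ← smul_add, hσ k, smul_smul, hvk m k, mul_comm]
    have hqe : ∀ m, xe m - p m = (AE ^ m) (xe 0 - p 0) := by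
      intro m
      induction m with
      | zero => simp
      | succ j ih =>
        have h1 : xe (j + 1) - p (j + 1) = AE (xe j - p j) := by
          rw [hxr j, ← hp j, map_sub]
          abel
        rw [h1, ih, pow_succ', ContinuousLinearMap.mul_apply]
    have herr : CE (xe n) + DE (v n) = CE ((AE ^ n) (xe 0 - p 0)) := by
      have h1 : CE (p n) + DE (v n) = 0 := by
        rw [hpdef]
        simp only [map_sum]
        rw [clm_pi_decomp DE (v n), ← Finset.sum_add_distrib]
        refine Finset.sum_eq_zero fun k _ => ?_
        rw [map_smul, ← smul_add, hregk k, smul_zero]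
      calc CE (xe n) + DE (v n)
          = CE (xe n - p n) + (CE (p n) + DE (v n)) := by rw [map_sub]; abel
        _ = CE ((AE ^ n) (xe 0 - p 0)) := by rw [h1, add_zero, hqe n]
    set T : ℝ := ‖x₀‖ + ‖z₀‖ + ‖v₀‖ with hTdef
    have hT0 : 0 ≤ T := by positivity
    have hq0 : ‖xe 0 - p 0‖ ≤ (CS + 1) * T := by
      have h1 : ‖xe 0‖ ≤ ‖x₀‖ + ‖z₀‖ := by
        rw [hx0, Prod.norm_def]
        exact max_le (le_add_of_nonneg_right (norm_nonneg _))
          (le_add_of_nonneg_left (norm_nonneg _))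
      have h2 : ‖p 0‖ ≤ CS * ‖v₀‖ := by
        rw [hpdef]
        calc ‖∑ k, v 0 k • σk k‖ ≤ ∑ k, ‖v 0 k • σk k‖ := norm_sum_le _ _
          _ ≤ ∑ k, ‖v₀‖ * ‖σk k‖ := by
              refine Finset.sum_le_sum fun k _ => ?_
              rw [norm_smul, hv0]
              exact mul_le_mul_of_nonneg_right (norm_le_pi_norm v₀ k) (norm_nonneg _)
          _ = CS * ‖v₀‖ := by
              rw [hCSdef, Finset.sum_mul]
              exact Finset.sum_congr rfl fun k _ => mul_comm _ _
      calc ‖xe 0 - p 0‖ ≤ ‖xe 0‖ + ‖p 0‖ := norm_sub_le _ _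
        _ ≤ (‖x₀‖ + ‖z₀‖) + CS * ‖v₀‖ := add_le_add h1 h2
        _ ≤ (CS + 1) * T := by
            rw [hTdef]
            nlinarith [norm_nonneg x₀, norm_nonneg z₀, norm_nonneg v₀, hCS0]
    have hrn : (0:ℝ) ≤ r ^ n := by positivity
    calc ‖CE (xe n) + DE (v n)‖ = ‖CE ((AE ^ n) (xe 0 - p 0))‖ := by rw [herr]
      _ ≤ ‖CE‖ * ‖(AE ^ n) (xe 0 - p 0)‖ := CE.le_opNorm _
      _ ≤ ‖CE‖ * (‖AE ^ n‖ * ‖xe 0 - p 0‖) :=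
          mul_le_mul_of_nonneg_left ((AE ^ n).le_opNorm _) (norm_nonneg _)
      _ ≤ (‖CE‖ + 1) * ((M * r ^ n) * ((CS + 1) * T)) := by
          have h3 : ‖AE ^ n‖ * ‖xe 0 - p 0‖ ≤ (M * r ^ n) * ((CS + 1) * T) :=
            mul_le_mul (hpow n) hq0 (norm_nonneg _) (by positivity)
          have h4 : ‖CE‖ * (‖AE ^ n‖ * ‖xe 0 - p 0‖) ≤ ‖CE‖ * ((M * r ^ n) * ((CS + 1) * T)) :=
            mul_le_mul_of_nonneg_left h3 (norm_nonneg _)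
          refine h4.trans ?_
          apply mul_le_mul_of_nonneg_right (by linarith [norm_nonneg CE]) (by positivity)
      _ = M * (‖CE‖ + 1) * (CS + 1) * Real.exp (-(-Real.log r * n)) * T := by
          rw [hexp]; ring
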